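/- Let A be a commutative ring and E an A-module. The Krull dimension of the trivial extension R = A ⋉ E equals the Krull dimension of A. -/
import Mathlib


/-- The Krull dimension of the trivial extension `A ⋉ E` equals the Krull dimension of `A`. -/
theorem krullDim_trivSqZeroExt (A : Type*) [CommRing A] (E : Type*) [AddCommGroup E]
    [Module A E] [Module Aᵐᵒᵖ E] [IsCentralScalar A E] :
    ringKrullDim (TrivSqZeroExt A E) = ringKrullDim A := by
  set f : TrivSqZeroExt A E →+* A := (TrivSqZeroExt.fstHom A A E).toRingHom with hf
  have hsurj : Function.Surjective f := fun a => ⟨TrivSqZeroExt.inl a, rfl⟩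
  have hker : ∀ (q : Ideal (TrivSqZeroExt A E)) (_ : q.IsPrime), RingHom.ker f ≤ q := by
    intro q hq x hx
    have hx0 : x.fst = 0 := hx
    have hxsq : x * x = 0 := by
      have : x = TrivSqZeroExt.inr x.snd := by
        ext
        · simp [hx0]
        · simp
      rw [this, TrivSqZeroExt.inr_mul_inr]
    exact hq.mem_of_pow_mem 2 (by rw [pow_two, hxsq]; exact q.zero_mem)
  refine le_antisymm ?_ (ringKrullDim_le_of_surjective f hsurj)
  have : ∀ q : PrimeSpectrum (TrivSqZeroExt A E), (q.asIdeal.map f).IsPrime := fun q =>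
    Ideal.map_isPrime_of_surjective hsurj (hker q.asIdeal q.isPrime)
  refine Order.krullDim_le_of_strictMono
    (fun q : PrimeSpectrum (TrivSqZeroExt A E) => (⟨q.asIdeal.map f, this q⟩ : PrimeSpectrum A)) ?_
  have hcm : ∀ q : PrimeSpectrum (TrivSqZeroExt A E),
      (q.asIdeal.map f).comap f = q.asIdeal := by
    intro q
    rw [Ideal.comap_map_of_surjective f hsurj, ← RingHom.ker_eq_comap_bot,
      sup_eq_left.mpr (hker q.asIdeal q.isPrime)]
  intro p q hpq
  constructor
  · exact Ideal.map_mono hpq.le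
  · intro hle
    have := Ideal.comap_mono (f := f) hle
    rw [hcm p, hcm q] at this
    exact absurd (le_antisymm hpq.le this) (by simpa using hpq.ne)
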